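/- Let p be a prime and let g(x) = b_e x^e + ⋯ + b_0 ∈ ℚ[x] have degree e ≥ 1 with b_0 ≠ 0, and suppose NP_p(g) has successive vertices (0, ν_p(b_e)), (e−m_1, ν_p(b_{m_1})), …, (e−m_{t−1}, ν_p(b_{m_{t−1}})), (e, ν_p(b_0)), where e = m_0 > m_1 > ⋯ > m_t = 0, with slopes λ_i = (ν_p(b_{m_i}) − ν_p(b_{m_{i−1}}))/(m_{i−1} − m_i). Let u be an integer with u > |λ_j| for every 1 ≤ j ≤ t, and let β be a positive integer with β ≤ d and gcd(β, u) = 1. Suppose f(x) = a_d x^d + ⋯ + a_0 ∈ ℚ[x] has degree d with ν_p(a_d) = 0 and ν_p(a_i) ≥ (u/β)(d−i) for every 0 ≤ i ≤ d with a_i ≠ 0. Then for every integer n ≥ 1, the Newton polygon NP_p(g(f^n(x))) of the composition g ∘ f^n has successive vertices (0, ν_p(b_e)), (d^n(e−m_1), ν_p(b_{m_1})), …, (d^n(e−m_{t−1}), ν_p(b_{m_{t−1}})), (d^n e, ν_p(b_0)). -/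

import Mathlib

open Polynomial

/-- The `n`-th compositional iterate of `f`: `f^0 = X`, `f^{n+1} = f ∘ f^n`. -/
noncomputable def polyIter (f : Polynomial ℚ) : ℕ → Polynomial ℚ
  | 0 => Polynomial.X
  | n + 1 => f.comp (polyIter f n)

/-- The `p`-adic valuation of a rational number, viewed as a rational number. -/
def nuQ (p : ℕ) (x : ℚ) : ℚ := (padicValRat p x : ℚ)

/-- `NP_p(h)` has successive vertices `(xs 0, ys 0), …, (xs t, ys t)`:
the corresponding coefficients are nonzero and have the prescribed valuations,
the slopes are strictly increasing, and every point of the Newton diagram lies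
on or above the polygon. -/
def HasNPVertices (p : ℕ) (h : Polynomial ℚ) (t : ℕ) (xs : ℕ → ℕ) (ys : ℕ → ℚ) : Prop :=
  h.coeff 0 ≠ 0 ∧
  xs 0 = 0 ∧ xs t = h.natDegree ∧
  (∀ s, s < t → xs s < xs (s + 1)) ∧
  (∀ s, s ≤ t → h.coeff (h.natDegree - xs s) ≠ 0 ∧
      nuQ p (h.coeff (h.natDegree - xs s)) = ys s) ∧
  (∀ s, 1 ≤ s → s < t →
      (ys s - ys (s - 1)) / ((xs s : ℚ) - (xs (s - 1) : ℚ)) <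
        (ys (s + 1) - ys s) / ((xs (s + 1) : ℚ) - (xs s : ℚ))) ∧
  (∀ s, 1 ≤ s → s ≤ t → ∀ i, h.coeff i ≠ 0 →
      xs (s - 1) ≤ h.natDegree - i → h.natDegree - i ≤ xs s →
      ys (s - 1) + ((ys s - ys (s - 1)) / ((xs s : ℚ) - (xs (s - 1) : ℚ))) *
          (((h.natDegree - i : ℕ) : ℚ) - (xs (s - 1) : ℚ)) ≤ nuQ p (h.coeff i))

/-- The number of irreducible factors of a polynomial over `ℚ`,
counted with multiplicity. -/
noncomputable def numFactors (P : Polynomial ℚ) : ℕ :=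
  (UniqueFactorizationMonoid.factors P).card

/-- `f` is `p^r`-pure. -/
def IsPpure (p r : ℕ) (f : Polynomial ℚ) : Prop :=
  f.coeff 0 ≠ 0 ∧
  padicValRat p f.leadingCoeff = 0 ∧
  padicValRat p (f.coeff 0) = (r : ℤ) ∧
  ∀ i, 0 < i → i < f.natDegree → f.coeff i ≠ 0 →
    (r : ℚ) / (f.natDegree : ℚ) ≤ nuQ p (f.coeff i) / ((f.natDegree : ℚ) - (i : ℚ))

section AuxNP
set_option linter.unusedSectionVars false

section AuxV
variable {p : ℕ} [hp : Fact p.Prime]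

lemma nuQ_mul {a b : ℚ} (ha : a ≠ 0) (hb : b ≠ 0) :
    nuQ p (a * b) = nuQ p a + nuQ p b := by
  simp [nuQ, padicValRat.mul ha hb]

lemma nuQ_pow {a : ℚ} (ha : a ≠ 0) (k : ℕ) :
    nuQ p (a ^ k) = (k : ℚ) * nuQ p a := by
  simp [nuQ, padicValRat.pow a]

lemma nuQ_one : nuQ p (1 : ℚ) = 0 := by simp [nuQ]

lemma nuQ_le_iff {a b : ℚ} :
    nuQ p a ≤ nuQ p b ↔ padicValRat p a ≤ padicValRat p b := by
  simp [nuQ]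

lemma nuQ_min_add {a b : ℚ} (hab : a + b ≠ 0) :
    min (nuQ p a) (nuQ p b) ≤ nuQ p (a + b) := by
  have h := padicValRat.min_le_padicValRat_add (p := p) hab
  rcases le_total (padicValRat p a) (padicValRat p b) with h' | h'
  · rw [min_eq_left h'] at h
    rw [min_eq_left (nuQ_le_iff.mpr h')]
    simpa [nuQ] using (Int.cast_le (R := ℚ)).mpr h
  · rw [min_eq_right h'] at h
    rw [min_eq_right (nuQ_le_iff.mpr h')]
    simpa [nuQ] using (Int.cast_le (R := ℚ)).mpr h

lemma nuQ_sum_le {α : Type*} (s : Finset α) (f : α → ℚ) (c : ℚ)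
    (h : ∀ a ∈ s, f a ≠ 0 → c ≤ nuQ p (f a)) (hs : ∑ a ∈ s, f a ≠ 0) :
    c ≤ nuQ p (∑ a ∈ s, f a) := by
  classical
  induction s using Finset.induction_on with
  | empty => simp at hs
  | @insert a s ha ih =>
    rw [Finset.sum_insert ha] at hs ⊢
    by_cases hfa : f a = 0
    · rw [hfa, zero_add] at hs ⊢
      exact ih (fun b hb => h b (Finset.mem_insert_of_mem hb)) hs
    · by_cases hrest : ∑ b ∈ s, f b = 0
      · rw [hrest, add_zero]
        exact h a (Finset.mem_insert_self a s) hfa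
      · refine le_trans (le_min (h a (Finset.mem_insert_self a s) hfa)
          (ih (fun b hb => h b (Finset.mem_insert_of_mem hb)) hrest)) (nuQ_min_add hs)

lemma nuQ_sum_lt {α : Type*} (s : Finset α) (f : α → ℚ) (c : ℚ)
    (h : ∀ a ∈ s, f a ≠ 0 → c < nuQ p (f a)) (hs : ∑ a ∈ s, f a ≠ 0) :
    c < nuQ p (∑ a ∈ s, f a) := by
  classical
  induction s using Finset.induction_on with
  | empty => simp at hs
  | @insert a s ha ih =>
    rw [Finset.sum_insert ha] at hs ⊢
    by_cases hfa : f a = 0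
    · rw [hfa, zero_add] at hs ⊢
      exact ih (fun b hb => h b (Finset.mem_insert_of_mem hb)) hs
    · by_cases hrest : ∑ b ∈ s, f b = 0
      · rw [hrest, add_zero]
        exact h a (Finset.mem_insert_self a s) hfa
      · refine lt_of_lt_of_le (lt_min (h a (Finset.mem_insert_self a s) hfa)
          (ih (fun b hb => h b (Finset.mem_insert_of_mem hb)) hrest)) (nuQ_min_add hs)

lemma nuQ_sum_dom {α : Type*} [DecidableEq α] (s : Finset α) (f : α → ℚ) (a0 : α)
    (ha0 : a0 ∈ s) (hf0 : f a0 ≠ 0)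
    (h : ∀ a ∈ s, a ≠ a0 → f a ≠ 0 → nuQ p (f a0) < nuQ p (f a)) :
    (∑ a ∈ s, f a) ≠ 0 ∧ nuQ p (∑ a ∈ s, f a) = nuQ p (f a0) := by
  classical
  rw [← Finset.add_sum_erase s f ha0]
  by_cases hR0 : ∑ a ∈ s.erase a0, f a = 0
  · simp [hR0, hf0]
  · have hlt : nuQ p (f a0) < nuQ p (∑ a ∈ s.erase a0, f a) :=
      nuQ_sum_lt _ _ _ (fun a haa hfa =>
        h a (Finset.mem_of_mem_erase haa) (Finset.ne_of_mem_erase haa) hfa) hR0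
    have hlt' : padicValRat p (f a0) < padicValRat p (∑ a ∈ s.erase a0, f a) := by
      have := hlt; simp only [nuQ] at this; exact_mod_cast this
    have hne : f a0 + ∑ a ∈ s.erase a0, f a ≠ 0 := by
      intro h0
      have hEq : ∑ a ∈ s.erase a0, f a = -f a0 := by linarith
      rw [hEq, padicValRat.neg] at hlt'
      exact absurd rfl (ne_of_lt hlt')
    refine ⟨hne, ?_⟩
    have := padicValRat.add_eq_of_lt (p := p) hne hf0 hR0 hlt'
    simp [nuQ, this]

end AuxV


lemma coeff_comp_support (g F : Polynomial ℚ) (i : ℕ) :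
    (g.comp F).coeff i = ∑ k ∈ g.support, g.coeff k * (F ^ k).coeff i := by
  rw [comp_eq_sum_left, Polynomial.sum_def, finset_sum_coeff]
  simp [coeff_C_mul]

/-- Coefficient valuation lower bound with rate `c` and virtual degree `D`. -/
def BdP (p : ℕ) (c : ℚ) (D : ℕ) (h : Polynomial ℚ) : Prop :=
  ∀ i, h.coeff i ≠ 0 → i ≤ D ∧ c * ((D : ℚ) - (i : ℚ)) ≤ nuQ p (h.coeff i)

section BdPLemmas
variable {p : ℕ} [hp : Fact p.Prime]

lemma BdP.mono {c c' : ℚ} {D : ℕ} {h : Polynomial ℚ}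
    (hB : BdP p c D h) (hcc : c' ≤ c) : BdP p c' D h := by
  intro i hi
  obtain ⟨h1, h2⟩ := hB i hi
  refine ⟨h1, le_trans (mul_le_mul_of_nonneg_right hcc ?_) h2⟩
  have : (i : ℚ) ≤ D := by exact_mod_cast h1
  linarith

lemma BdP.mul {c : ℚ} {D1 D2 : ℕ} {h1 h2 : Polynomial ℚ}
    (hB1 : BdP p c D1 h1) (hB2 : BdP p c D2 h2) : BdP p c (D1 + D2) (h1 * h2) := by
  intro i hi
  rw [coeff_mul] at hi ⊢
  obtain ⟨x, hx, hxne⟩ := Finset.exists_ne_zero_of_sum_ne_zero hi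
  have hx1 : h1.coeff x.1 ≠ 0 := fun h => hxne (by simp [h])
  have hx2 : h2.coeff x.2 ≠ 0 := fun h => hxne (by simp [h])
  have hxi : x.1 + x.2 = i := Finset.HasAntidiagonal.mem_antidiagonal.mp hx
  constructor
  · have := (hB1 x.1 hx1).1; have := (hB2 x.2 hx2).1; omega
  · apply nuQ_sum_le _ _ _ _ hi
    intro a ha hane
    have ha1 : h1.coeff a.1 ≠ 0 := fun h => hane (by simp [h])
    have ha2 : h2.coeff a.2 ≠ 0 := fun h => hane (by simp [h])
    have hai : a.1 + a.2 = i := Finset.HasAntidiagonal.mem_antidiagonal.mp ha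
    rw [nuQ_mul ha1 ha2]
    have b1 := (hB1 a.1 ha1).2
    have b2 := (hB2 a.2 ha2).2
    have hc : (a.1 : ℚ) + (a.2 : ℚ) = (i : ℚ) := by exact_mod_cast hai
    have key : c * (((D1 + D2 : ℕ) : ℚ) - (i : ℚ))
        = c * ((D1 : ℚ) - (a.1 : ℚ)) + c * ((D2 : ℚ) - (a.2 : ℚ)) := by
      push_cast
      rw [← hc]; ring
    linarith

lemma BdP.pow {c : ℚ} {D : ℕ} {h : Polynomial ℚ} (hB : BdP p c D h) :
    ∀ k, BdP p c (k * D) (h ^ k) := by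
  intro k
  induction k with
  | zero =>
    intro i hi
    rw [pow_zero, coeff_one] at hi ⊢
    have hi0 : i = 0 := by by_contra h0; simp [h0] at hi
    subst hi0
    simp [nuQ]
  | succ k ih =>
    have := BdP.mul ih hB
    rw [pow_succ] at *
    have hD : k * D + D = (k + 1) * D := by ring
    rwa [hD] at this

lemma BdP.comp {γ c : ℚ} {d D : ℕ} {f F : Polynomial ℚ}
    (hf : BdP p γ d f) (hF : BdP p c D F) (hγ : c * (D : ℚ) ≤ γ) :
    BdP p c (d * D) (f.comp F) := by
  intro i hi
  rw [coeff_comp_support] at hi ⊢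
  obtain ⟨k, hk, hkne⟩ := Finset.exists_ne_zero_of_sum_ne_zero hi
  constructor
  · have hk1 : f.coeff k ≠ 0 := fun h => hkne (by simp [h])
    have hk2 : (F ^ k).coeff i ≠ 0 := fun h => hkne (by simp [h])
    have h1 := (hf k hk1).1
    have h2 := ((hF.pow k) i hk2).1
    calc i ≤ k * D := h2
    _ ≤ d * D := Nat.mul_le_mul_right _ h1
  · apply nuQ_sum_le _ _ _ _ hi
    intro a ha hane
    have ha1 : f.coeff a ≠ 0 := fun h => hane (by simp [h])
    have ha2 : (F ^ a).coeff i ≠ 0 := fun h => hane (by simp [h])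
    rw [nuQ_mul ha1 ha2]
    have b1 := (hf a ha1).2
    have b2 := ((hF.pow a) i ha2).2
    have had : a ≤ d := (hf a ha1).1
    have hadQ : (a : ℚ) ≤ (d : ℚ) := by exact_mod_cast had
    have h3 : (c * (D : ℚ)) * ((d : ℚ) - (a : ℚ)) ≤ γ * ((d : ℚ) - (a : ℚ)) :=
      mul_le_mul_of_nonneg_right hγ (by linarith)
    have key : c * (((d * D : ℕ) : ℚ) - (i : ℚ))
        = c * (((a * D : ℕ) : ℚ) - (i : ℚ)) + (c * (D : ℚ)) * ((d : ℚ) - (a : ℚ)) := by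
      push_cast; ring
    linarith

end BdPLemmas

section Polygon
variable {V lam mQ : ℕ → ℚ} {t : ℕ} {u : ℚ}

lemma lam_mono (hlam : ∀ s, 1 ≤ s → s < t → lam s < lam (s + 1)) :
    ∀ b, b ≤ t → ∀ a, 1 ≤ a → a ≤ b → lam a ≤ lam b := by
  intro b
  induction b with
  | zero => intro _ a ha hab; exact absurd hab (by omega)
  | succ n ih =>
    intro hbt a ha hab
    rcases Nat.eq_or_lt_of_le hab with h | h
    · rw [h]
    · have h1 : lam a ≤ lam n := ih (by omega) a ha (by omega)
      have h2 : lam n < lam (n + 1) := hlam n (by omega) (by omega)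
      linarith

lemma line_vertex
    (hstep : ∀ s, 1 ≤ s → s ≤ t → V s = V (s - 1) + lam s * (mQ (s - 1) - mQ s))
    (hgap : ∀ s, 1 ≤ s → s ≤ t → mQ s < mQ (s - 1))
    (hlam : ∀ s, 1 ≤ s → s < t → lam s < lam (s + 1)) :
    ∀ s, 1 ≤ s → s ≤ t → ∀ r, r ≤ t → V (s - 1) + lam s * (mQ (s - 1) - mQ r) ≤ V r := by
  have hmono := lam_mono (t := t) hlam
  intro s hs1 hst r hrt
  obtain ⟨σ, rfl⟩ : ∃ σ, s = σ + 1 := ⟨s - 1, by omega⟩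
  simp only [Nat.add_sub_cancel]
  rcases le_or_gt σ r with h | h
  · have up : ∀ j, σ + j ≤ t → V σ + lam (σ + 1) * (mQ σ - mQ (σ + j)) ≤ V (σ + j) := by
      intro j
      induction j with
      | zero => intro _; simp
      | succ n ih =>
        intro hjt
        have e1 := hstep (σ + n + 1) (by omega) (by omega)
        have hidx : (σ + n + 1) - 1 = σ + n := by omega
        rw [hidx] at e1
        have e2 : lam (σ + 1) ≤ lam (σ + n + 1) :=
          hmono (σ + n + 1) (by omega) (σ + 1) (by omega) (by omega)
        have e3 : mQ (σ + n + 1) < mQ (σ + n) := by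
          have := hgap (σ + n + 1) (by omega) (by omega)
          rwa [hidx] at this
        have e4 := ih (by omega)
        have hidx2 : σ + (n + 1) = σ + n + 1 := by omega
        rw [hidx2]
        nlinarith [mul_le_mul_of_nonneg_right e2 (le_of_lt (sub_pos.2 e3))]
    obtain ⟨j, rfl⟩ : ∃ j, r = σ + j := ⟨r - σ, by omega⟩
    exact up j hrt
  · have down : ∀ j, j ≤ σ → V σ + lam (σ + 1) * (mQ σ - mQ (σ - j)) ≤ V (σ - j) := by
      intro j
      induction j with
      | zero => intro _; simp
      | succ n ih =>
        intro hjσ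
        have hσn : σ - n = (σ - (n + 1)) + 1 := by omega
        have e1 := hstep ((σ - (n + 1)) + 1) (by omega) (by omega)
        rw [Nat.add_sub_cancel] at e1
        have e2 : lam ((σ - (n + 1)) + 1) ≤ lam (σ + 1) :=
          hmono (σ + 1) (by omega) ((σ - (n + 1)) + 1) (by omega) (by omega)
        have e3 : mQ ((σ - (n + 1)) + 1) < mQ (σ - (n + 1)) := by
          have := hgap ((σ - (n + 1)) + 1) (by omega) (by omega)
          rwa [Nat.add_sub_cancel] at this
        have e4 := ih (by omega)
        rw [hσn] at e4
        nlinarith [mul_le_mul_of_nonneg_right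
          (sub_nonneg.2 e2) (le_of_lt (sub_pos.2 e3))]
    have := down (σ - r) (by omega)
    have hidx : σ - (σ - r) = r := by omega
    rwa [hidx] at this

lemma vertex_chain
    (hstep : ∀ s, 1 ≤ s → s ≤ t → V s = V (s - 1) + lam s * (mQ (s - 1) - mQ s))
    (hgap : ∀ s, 1 ≤ s → s ≤ t → mQ s < mQ (s - 1))
    (hult : ∀ s, 1 ≤ s → s ≤ t → lam s < u) :
    ∀ j r, 1 ≤ j → r + j ≤ t → V (r + j) - u * (mQ r - mQ (r + j)) < V r := by
  intro j
  induction j with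
  | zero => intro r h1 _; omega
  | succ n ih =>
    intro r _ hrt
    have e1 := hstep (r + 1) (by omega) (by omega)
    rw [Nat.add_sub_cancel] at e1
    have e2 : mQ (r + 1) < mQ r := by
      have := hgap (r + 1) (by omega) (by omega)
      rwa [Nat.add_sub_cancel] at this
    have e3 := hult (r + 1) (by omega) (by omega)
    rcases Nat.eq_zero_or_pos n with hn | hn
    · subst hn
      nlinarith [mul_lt_mul_of_pos_right e3 (sub_pos.2 e2)]
    · have e4 := ih (r + 1) hn (by omega)
      have hidx : r + 1 + n = r + (n + 1) := by omega
      rw [hidx] at e4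
      nlinarith [mul_lt_mul_of_pos_right e3 (sub_pos.2 e2)]

lemma vertex_chain_le
    (hstep : ∀ s, 1 ≤ s → s ≤ t → V s = V (s - 1) + lam s * (mQ (s - 1) - mQ s))
    (hgap : ∀ s, 1 ≤ s → s ≤ t → mQ s < mQ (s - 1))
    (hult : ∀ s, 1 ≤ s → s ≤ t → lam s < u) :
    ∀ j r, r + j ≤ t → V (r + j) - u * (mQ r - mQ (r + j)) ≤ V r := by
  intro j r hrt
  rcases Nat.eq_zero_or_pos j with hj | hj
  · subst hj; simp
  · exact le_of_lt (vertex_chain hstep hgap hult j r hj hrt)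

end Polygon

end AuxNP

set_option maxHeartbeats 1000000 in
/-- Corollary 1.7 -/
theorem newton_polygon_comp_iterate_general
    (p : ℕ) (hp : p.Prime)
    (g f : Polynomial ℚ) (e d t : ℕ) (m : ℕ → ℕ)
    (hge : g.natDegree = e) (he1 : 1 ≤ e)
    (hb0 : g.coeff 0 ≠ 0)
    (hm0 : m 0 = e) (hmt : m t = 0)
    (hmdec : ∀ s, s < t → m (s + 1) < m s)
    (hNPg : HasNPVertices p g t (fun s => e - m s) (fun s => nuQ p (g.coeff (m s))))
    (u : ℤ) (β : ℕ) (hβ : 1 ≤ β) (hβd : β ≤ d)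
    (hgcdβu : Int.gcd (β : ℤ) u = 1)
    (hu : ∀ j, 1 ≤ j → j ≤ t →
      |(nuQ p (g.coeff (m j)) - nuQ p (g.coeff (m (j - 1)))) /
          ((m (j - 1) : ℚ) - (m j : ℚ))| < (u : ℚ))
    (hfd : f.natDegree = d)
    (had : padicValRat p (f.coeff d) = 0)
    (hai : ∀ i, i ≤ d → f.coeff i ≠ 0 →
      (u : ℚ) / (β : ℚ) * ((d : ℚ) - (i : ℚ)) ≤ nuQ p (f.coeff i)) :
    ∀ n : ℕ, 1 ≤ n →
      HasNPVertices p (g.comp (polyIter f n)) t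
        (fun s => d ^ n * (e - m s)) (fun s => nuQ p (g.coeff (m s))) := by
  haveI : Fact p.Prime := ⟨hp⟩
  -- basic numeric facts
  have ht1 : 1 ≤ t := by
    by_contra h
    push_neg at h
    interval_cases t
    omega
  have hd1 : 1 ≤ d := le_trans hβ hβd
  have hβQ : (0 : ℚ) < (β : ℚ) := by exact_mod_cast hβ
  have hdQ : (0 : ℚ) < (d : ℚ) := by exact_mod_cast hd1
  have hβdQ : (β : ℚ) ≤ (d : ℚ) := by exact_mod_cast hβd
  have hu0 : (0 : ℚ) < (u : ℚ) := lt_of_le_of_lt (abs_nonneg _) (hu 1 le_rfl ht1)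
  -- monotonicity of m
  have hmono : ∀ b, b ≤ t → ∀ a, a ≤ b → m b ≤ m a := by
    intro b
    induction b with
    | zero => intro _ a ha; have : a = 0 := by omega
              rw [this]
    | succ n ih =>
      intro hbt a hab
      rcases Nat.eq_or_lt_of_le hab with h | h
      · rw [h]
      · have h1 : m (n + 1) < m n := hmdec n (by omega)
        have h2 : m n ≤ m a := ih (by omega) a (by omega)
        omega
  have hstrict : ∀ a b, a < b → b ≤ t → m b < m a := by
    intro a b hab hbt
    have h1 : m b ≤ m (a + 1) := hmono b hbt (a + 1) (by omega)
    have h2 := hmdec a (by omega)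
    omega
  have hme : ∀ s, s ≤ t → m s ≤ e := by
    intro s hs
    have := hmono s hs 0 (Nat.zero_le _)
    omega
  -- unpack the Newton polygon hypothesis on g
  obtain ⟨hg0, hx0, hxt, hxinc, hvert, hslope, hray⟩ := hNPg
  simp only at hvert hslope hray
  -- vertices of g
  have hbm : ∀ s, s ≤ t → g.coeff (m s) ≠ 0 := by
    intro s hs
    have h1 := (hvert s hs).1
    have hidx : g.natDegree - (e - m s) = m s := by
      rw [hge]; have := hme s hs; omega
    rwa [hidx] at h1
  -- cast helper
  have hcastX : ∀ s, s ≤ t → ((e - m s : ℕ) : ℚ) = (e : ℚ) - (m s : ℚ) := by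
    intro s hs
    exact_mod_cast Nat.cast_sub (hme s hs)
  -- gap in ℚ
  have hgapQ : ∀ s, 1 ≤ s → s ≤ t → ((m s : ℕ) : ℚ) < ((m (s - 1) : ℕ) : ℚ) := by
    intro s h1 h2
    exact_mod_cast hstrict (s - 1) s (by omega) h2
  -- slope increase, in m-coordinates
  have hlam' : ∀ s, 1 ≤ s → s < t →
      (nuQ p (g.coeff (m s)) - nuQ p (g.coeff (m (s - 1)))) /
          ((m (s - 1) : ℚ) - (m s : ℚ)) <
      (nuQ p (g.coeff (m (s + 1))) - nuQ p (g.coeff (m s))) /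
          ((m ((s + 1) - 1) : ℚ) - (m (s + 1) : ℚ)) := by
    intro s h1 h2
    have H := hslope s h1 h2
    have c1 : ((e - m s : ℕ) : ℚ) - ((e - m (s - 1) : ℕ) : ℚ)
        = (m (s - 1) : ℚ) - (m s : ℚ) := by
      rw [hcastX s (by omega), hcastX (s - 1) (by omega)]; ring
    have c2 : ((e - m (s + 1) : ℕ) : ℚ) - ((e - m s : ℕ) : ℚ)
        = (m s : ℚ) - (m (s + 1) : ℚ) := by
      rw [hcastX s (by omega), hcastX (s + 1) (by omega)]; ring
    rw [c1, c2] at H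
    simpa using H
  -- the step equations (definition of the slopes)
  have hstep' : ∀ s, 1 ≤ s → s ≤ t →
      nuQ p (g.coeff (m s)) = nuQ p (g.coeff (m (s - 1))) +
        ((nuQ p (g.coeff (m s)) - nuQ p (g.coeff (m (s - 1)))) /
          ((m (s - 1) : ℚ) - (m s : ℚ))) * ((m (s - 1) : ℚ) - (m s : ℚ)) := by
    intro s h1 h2
    have hden : ((m (s - 1) : ℚ) - (m s : ℚ)) ≠ 0 :=
      sub_ne_zero.2 (ne_of_gt (hgapQ s h1 h2))
    rw [div_mul_cancel₀ _ hden]; ring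
  -- lam s < u
  have hult : ∀ s, 1 ≤ s → s ≤ t →
      (nuQ p (g.coeff (m s)) - nuQ p (g.coeff (m (s - 1)))) /
          ((m (s - 1) : ℚ) - (m s : ℚ)) < (u : ℚ) := by
    intro s h1 h2
    exact lt_of_le_of_lt (le_abs_self _) (hu s h1 h2)
  -- convexity: every vertex lies above every extended segment line
  have hline : ∀ s, 1 ≤ s → s ≤ t → ∀ r, r ≤ t →
      nuQ p (g.coeff (m (s - 1))) +
        ((nuQ p (g.coeff (m s)) - nuQ p (g.coeff (m (s - 1)))) /
          ((m (s - 1) : ℚ) - (m s : ℚ))) * ((m (s - 1) : ℚ) - (m r : ℚ))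
        ≤ nuQ p (g.coeff (m r)) := by
    intro s h1 h2 r h3
    exact line_vertex
      (V := fun s => nuQ p (g.coeff (m s)))
      (lam := fun s => (nuQ p (g.coeff (m s)) - nuQ p (g.coeff (m (s - 1)))) /
          ((m (s - 1) : ℚ) - (m s : ℚ)))
      (mQ := fun s => (m s : ℚ)) (t := t) hstep' hgapQ hlam' s h1 h2 r h3
  -- vertex chains
  have hchain_lt : ∀ j r, 1 ≤ j → r + j ≤ t →
      nuQ p (g.coeff (m (r + j))) - (u : ℚ) * ((m r : ℚ) - (m (r + j) : ℚ))
        < nuQ p (g.coeff (m r)) := by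
    intro j r h1 h2
    exact vertex_chain
      (V := fun s => nuQ p (g.coeff (m s)))
      (lam := fun s => (nuQ p (g.coeff (m s)) - nuQ p (g.coeff (m (s - 1)))) /
          ((m (s - 1) : ℚ) - (m s : ℚ)))
      (mQ := fun s => (m s : ℚ)) (t := t) hstep' hgapQ hult j r h1 h2
  have hchain_le : ∀ j r, r + j ≤ t →
      nuQ p (g.coeff (m (r + j))) - (u : ℚ) * ((m r : ℚ) - (m (r + j) : ℚ))
        ≤ nuQ p (g.coeff (m r)) := by
    intro j r h2
    exact vertex_chain_le
      (V := fun s => nuQ p (g.coeff (m s)))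
      (lam := fun s => (nuQ p (g.coeff (m s)) - nuQ p (g.coeff (m (s - 1)))) /
          ((m (s - 1) : ℚ) - (m s : ℚ)))
      (mQ := fun s => (m s : ℚ)) (t := t) hstep' hgapQ hult j r h2
  -- the ray condition of g, in m-coordinates
  have hrayK : ∀ s, 1 ≤ s → s ≤ t → ∀ k, k ≤ e → g.coeff k ≠ 0 →
      m s ≤ k → k ≤ m (s - 1) →
      nuQ p (g.coeff (m (s - 1))) +
        ((nuQ p (g.coeff (m s)) - nuQ p (g.coeff (m (s - 1)))) /
          ((m (s - 1) : ℚ) - (m s : ℚ))) * ((m (s - 1) : ℚ) - (k : ℚ))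
        ≤ nuQ p (g.coeff k) := by
    intro s h1 h2 k hke hkc hmk hkm
    have H := hray s h1 h2 k hkc (by rw [hge]; have := hme (s - 1) (by omega); omega)
      (by rw [hge]; omega)
    have hms : m s ≤ e := hme s h2
    have hms1 : m (s - 1) ≤ e := hme (s - 1) (by omega)
    have c1 : ((e - m s : ℕ) : ℚ) - ((e - m (s - 1) : ℕ) : ℚ)
        = (m (s - 1) : ℚ) - (m s : ℚ) := by
      rw [hcastX s h2, hcastX (s - 1) (by omega)]; ring
    have c3 : ((g.natDegree - k : ℕ) : ℚ) - ((e - m (s - 1) : ℕ) : ℚ)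
        = (m (s - 1) : ℚ) - (k : ℚ) := by
      rw [hge, Nat.cast_sub hke, hcastX (s - 1) (by omega)]; ring
    rw [c1, c3] at H
    exact H
  -- locating a coefficient within a segment
  have hseg : ∀ k, k ≤ e → ∃ j, 1 ≤ j ∧ j ≤ t ∧ m j ≤ k ∧ k ≤ m (j - 1) := by
    intro k hk
    have key : ∀ s, s ≤ t → m s ≤ k → ∃ j, 1 ≤ j ∧ j ≤ t ∧ m j ≤ k ∧ k ≤ m (j - 1) := by
      intro s
      induction s with
      | zero =>
        intro _ h0
        refine ⟨1, le_rfl, ht1, ?_, ?_⟩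
        · have := hmono 1 ht1 0 (by omega); omega
        · simp only [Nat.sub_self]; omega
      | succ n ih =>
        intro hst hmk
        by_cases hkn : k ≤ m n
        · exact ⟨n + 1, by omega, hst, hmk, by simpa using hkn⟩
        · exact ih (by omega) (by omega)
    exact key t le_rfl (by rw [hmt]; omega)
  -- every coefficient of g lies above every extended segment line
  have habove : ∀ s, 1 ≤ s → s ≤ t → ∀ k, k ≤ e → g.coeff k ≠ 0 →
      nuQ p (g.coeff (m (s - 1))) +
        ((nuQ p (g.coeff (m s)) - nuQ p (g.coeff (m (s - 1)))) /
          ((m (s - 1) : ℚ) - (m s : ℚ))) * ((m (s - 1) : ℚ) - (k : ℚ))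
        ≤ nuQ p (g.coeff k) := by
    intro s hs1 hst k hke hkc
    obtain ⟨j, hj1, hjt, hjk, hkj⟩ := hseg k hke
    have A := hrayK j hj1 hjt k hke hkc hjk hkj
    have P1 := hline s hs1 hst (j - 1) (by omega)
    have P2 := hline s hs1 hst j hjt
    have E := hstep' j hj1 hjt
    have hab : ((m j : ℕ) : ℚ) < ((m (j - 1) : ℕ) : ℚ) := hgapQ j hj1 hjt
    have hka : ((m j : ℕ) : ℚ) ≤ (k : ℚ) := by exact_mod_cast hjk
    have hkb : (k : ℚ) ≤ ((m (j - 1) : ℕ) : ℚ) := by exact_mod_cast hkj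
    set Ls := (nuQ p (g.coeff (m s)) - nuQ p (g.coeff (m (s - 1)))) /
          ((m (s - 1) : ℚ) - (m s : ℚ)) with hLs
    set Lj := (nuQ p (g.coeff (m j)) - nuQ p (g.coeff (m (j - 1)))) /
          ((m (j - 1) : ℚ) - (m j : ℚ)) with hLj
    have key : nuQ p (g.coeff (m (s - 1))) + Ls * ((m (s - 1) : ℚ) - (k : ℚ))
        ≤ nuQ p (g.coeff (m (j - 1))) + Lj * ((m (j - 1) : ℚ) - (k : ℚ)) := by
      have id1 : ((m (j - 1) : ℚ) - (m j : ℚ)) *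
          ((nuQ p (g.coeff (m (j - 1))) + Lj * ((m (j - 1) : ℚ) - (k : ℚ)))
            - (nuQ p (g.coeff (m (s - 1))) + Ls * ((m (s - 1) : ℚ) - (k : ℚ))))
          = ((k : ℚ) - (m j : ℚ)) * (nuQ p (g.coeff (m (j - 1)))
              - (nuQ p (g.coeff (m (s - 1))) + Ls * ((m (s - 1) : ℚ) - (m (j - 1) : ℚ))))
          + ((m (j - 1) : ℚ) - (k : ℚ)) *
              ((nuQ p (g.coeff (m (j - 1))) + Lj * ((m (j - 1) : ℚ) - (m j : ℚ)))
              - (nuQ p (g.coeff (m (s - 1))) + Ls * ((m (s - 1) : ℚ) - (m j : ℚ)))) := by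
        ring
      have h4 : 0 ≤ ((k : ℚ) - (m j : ℚ)) * (nuQ p (g.coeff (m (j - 1)))
              - (nuQ p (g.coeff (m (s - 1))) + Ls * ((m (s - 1) : ℚ) - (m (j - 1) : ℚ))))
          + ((m (j - 1) : ℚ) - (k : ℚ)) *
              ((nuQ p (g.coeff (m (j - 1))) + Lj * ((m (j - 1) : ℚ) - (m j : ℚ)))
              - (nuQ p (g.coeff (m (s - 1))) + Ls * ((m (s - 1) : ℚ) - (m j : ℚ)))) := by
        refine add_nonneg (mul_nonneg (by linarith) (by linarith [P1]))
          (mul_nonneg (by linarith) (by linarith [P2, E]))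
      rw [← id1] at h4
      nlinarith [h4, hab]
    linarith [A, key]
  -- strict lower bound below a vertex
  have hbelow : ∀ s, s ≤ t → ∀ k, k ≤ e → m s < k → g.coeff k ≠ 0 →
      nuQ p (g.coeff (m s)) - (u : ℚ) * ((k : ℚ) - ((m s : ℕ) : ℚ))
        < nuQ p (g.coeff k) := by
    intro s hst k hke hms hkc
    obtain ⟨j, hj1, hjt, hjk, hkj⟩ := hseg k hke
    have hjs : j ≤ s := by
      by_contra hjs
      push_neg at hjs
      have : m (j - 1) ≤ m s := hmono (j - 1) (by omega) s (by omega)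
      omega
    have A := hrayK j hj1 hjt k hke hkc hjk hkj
    have E := hstep' j hj1 hjt
    have hLju := hult j hj1 hjt
    have hchain := hchain_le (s - j) j (by omega)
    rw [show j + (s - j) = s from by omega] at hchain
    set Lj := (nuQ p (g.coeff (m j)) - nuQ p (g.coeff (m (j - 1)))) /
          ((m (j - 1) : ℚ) - (m j : ℚ)) with hLj
    have idu : (u : ℚ) * ((k : ℚ) - ((m s : ℕ) : ℚ))
        = (u : ℚ) * ((k : ℚ) - ((m j : ℕ) : ℚ))
          + (u : ℚ) * (((m j : ℕ) : ℚ) - ((m s : ℕ) : ℚ)) := by ring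
    rcases Nat.lt_or_ge (m j) k with hmk | hmk
    · have hkaS : ((m j : ℕ) : ℚ) < (k : ℚ) := by exact_mod_cast hmk
      have hprod : Lj * ((k : ℚ) - ((m j : ℕ) : ℚ))
          < (u : ℚ) * ((k : ℚ) - ((m j : ℕ) : ℚ)) :=
        mul_lt_mul_of_pos_right hLju (by linarith)
      have idp : Lj * (((m (j - 1) : ℕ) : ℚ) - (k : ℚ))
          = Lj * (((m (j - 1) : ℕ) : ℚ) - ((m j : ℕ) : ℚ))
            - Lj * ((k : ℚ) - ((m j : ℕ) : ℚ)) := by ring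
      linarith [A, E, idp, hprod, hchain, idu]
    · have hkm : k = m j := by omega
      have hjslt : j < s := by
        rcases Nat.eq_or_lt_of_le hjs with h | h
        · rw [h] at hkm; omega
        · exact h
      have hchainS := hchain_lt (s - j) j (by omega) (by omega)
      rw [show j + (s - j) = s from by omega] at hchainS
      have hkQ : (k : ℚ) = ((m j : ℕ) : ℚ) := by exact_mod_cast hkm
      have idp2 : Lj * (((m (j - 1) : ℕ) : ℚ) - (k : ℚ))
          = Lj * (((m (j - 1) : ℕ) : ℚ) - ((m j : ℕ) : ℚ)) := by rw [hkQ]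
      have idu2 : (u : ℚ) * ((k : ℚ) - ((m s : ℕ) : ℚ))
          = (u : ℚ) * (((m j : ℕ) : ℚ) - ((m s : ℕ) : ℚ)) := by rw [hkQ]
      linarith [A, E, idp2, idu2, hchainS]
  -- facts about f
  have hf0 : f ≠ 0 := by
    intro h
    rw [h, natDegree_zero] at hfd
    omega
  have hlcf : f.leadingCoeff ≠ 0 := leadingCoeff_ne_zero.2 hf0
  have hlcfd : f.leadingCoeff = f.coeff d := by rw [← hfd]; rfl
  have hvlcf : nuQ p f.leadingCoeff = 0 := by
    rw [hlcfd]; simp [nuQ, had]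
  have hBf : BdP p ((u : ℚ) / (β : ℚ)) d f := by
    intro i hi
    have hid : i ≤ d := hfd ▸ le_natDegree_of_ne_zero hi
    exact ⟨hid, hai i hid hi⟩
  -- degree and leading coefficient of the iterates
  have hdegIter : ∀ n : ℕ, (polyIter f n).natDegree = d ^ n ∧
      (polyIter f n).leadingCoeff ≠ 0 ∧ nuQ p ((polyIter f n).leadingCoeff) = 0 := by
    intro n
    induction n with
    | zero =>
      refine ⟨by simp [polyIter], ?_, ?_⟩ <;> simp [polyIter, nuQ]
    | succ n ih =>
      obtain ⟨h1, h2, h3⟩ := ih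
      have hd0 : (polyIter f n).natDegree ≠ 0 := by
        rw [h1]
        have : 0 < d ^ n := pow_pos (by omega) n
        omega
      have hiter : polyIter f (n + 1) = f.comp (polyIter f n) := rfl
      refine ⟨?_, ?_, ?_⟩
      · rw [hiter, natDegree_comp, hfd, h1, pow_succ]; ring
      · rw [hiter, leadingCoeff_comp hd0]
        exact mul_ne_zero hlcf (pow_ne_zero _ h2)
      · rw [hiter, leadingCoeff_comp hd0, nuQ_mul hlcf (pow_ne_zero _ h2),
          nuQ_pow h2, hvlcf, h3]
        ring
  -- coefficient bounds for the iterates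
  have hβne : (β : ℚ) ≠ 0 := ne_of_gt hβQ
  have hdne : (d : ℚ) ≠ 0 := ne_of_gt hdQ
  have hγ0 : 0 ≤ (u : ℚ) / (β : ℚ) := le_of_lt (div_pos hu0 hβQ)
  have hBiter : ∀ n : ℕ, 1 ≤ n →
      BdP p ((u : ℚ) / (β : ℚ) * (d : ℚ) / (d : ℚ) ^ n) (d ^ n) (polyIter f n) := by
    intro n hn
    induction n with
    | zero => omega
    | succ n ih =>
      rcases Nat.eq_zero_or_pos n with h0 | h0
      · subst h0
        have h1 : polyIter f 1 = f := by
          show f.comp Polynomial.X = f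
          exact comp_X
        have h2 : (u : ℚ) / (β : ℚ) * (d : ℚ) / (d : ℚ) ^ 1 = (u : ℚ) / (β : ℚ) := by
          rw [pow_one, mul_div_assoc, div_self hdne, mul_one]
        rw [h1, h2, pow_one]
        exact hBf
      · have hB := ih h0
        have hdnne : (d : ℚ) ^ n ≠ 0 := pow_ne_zero _ hdne
        have hw : BdP p ((u : ℚ) / (β : ℚ) / (d : ℚ) ^ n) (d ^ n) (polyIter f n) := by
          refine hB.mono ?_
          have h1 : (u : ℚ) / (β : ℚ) ≤ (u : ℚ) / (β : ℚ) * (d : ℚ) :=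
            le_mul_of_one_le_right hγ0 (by exact_mod_cast hd1)
          have hdp : (0 : ℚ) < (d : ℚ) ^ n := pow_pos hdQ n
          exact (div_le_div_iff_of_pos_right hdp).2 h1
        have hcc : ((u : ℚ) / (β : ℚ) / (d : ℚ) ^ n) * ((d ^ n : ℕ) : ℚ)
            ≤ (u : ℚ) / (β : ℚ) := by
          push_cast
          rw [div_mul_cancel₀ _ hdnne]
        have hcomp := BdP.comp hBf hw hcc
        have hdd : d * d ^ n = d ^ (n + 1) := by rw [pow_succ]; ring
        rw [hdd] at hcomp
        have hcst : (u : ℚ) / (β : ℚ) / (d : ℚ) ^ n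
            = (u : ℚ) / (β : ℚ) * (d : ℚ) / (d : ℚ) ^ (n + 1) := by
          rw [pow_succ]
          field_simp
        rwa [hcst] at hcomp
  -- now fix n
  intro n hn
  have hPpos : 0 < d ^ n := pow_pos (by omega : 0 < d) n
  have hPQ : (0 : ℚ) < (d : ℚ) ^ n := pow_pos hdQ n
  have hPQne : (d : ℚ) ^ n ≠ 0 := ne_of_gt hPQ
  obtain ⟨hFdeg, hFlc, hFlcv⟩ := hdegIter n
  have hBF := hBiter n hn
  have hGdeg : (g.comp (polyIter f n)).natDegree = e * d ^ n := by
    rw [natDegree_comp, hge, hFdeg]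
  have hcnP : ((u : ℚ) / (β : ℚ) * (d : ℚ) / (d : ℚ) ^ n) * (d : ℚ) ^ n
      = (u : ℚ) / (β : ℚ) * (d : ℚ) := div_mul_cancel₀ _ hPQne
  have hgdu : (u : ℚ) ≤ (u : ℚ) / (β : ℚ) * (d : ℚ) := by
    rw [div_mul_eq_mul_div, le_div_iff₀ hβQ]
    exact mul_le_mul_of_nonneg_left hβdQ hu0.le
  -- valuation of the coefficients at the stretched vertices
  have hvertexG : ∀ s, s ≤ t →
      (g.comp (polyIter f n)).coeff (d ^ n * m s) ≠ 0 ∧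
      nuQ p ((g.comp (polyIter f n)).coeff (d ^ n * m s)) = nuQ p (g.coeff (m s)) := by
    intro s hst
    rw [coeff_comp_support]
    have hms : m s ∈ g.support := mem_support_iff.2 (hbm s hst)
    have hcoeffpow : ((polyIter f n) ^ (m s)).coeff (d ^ n * m s)
        = (polyIter f n).leadingCoeff ^ (m s) := by
      have hidx : d ^ n * m s = m s * (polyIter f n).natDegree := by
        rw [hFdeg]; ring
      rw [hidx, coeff_pow_mul_natDegree]
    have hmain : g.coeff (m s) * ((polyIter f n) ^ (m s)).coeff (d ^ n * m s) ≠ 0 := by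
      rw [hcoeffpow]; exact mul_ne_zero (hbm s hst) (pow_ne_zero _ hFlc)
    have hmainv : nuQ p (g.coeff (m s) * ((polyIter f n) ^ (m s)).coeff (d ^ n * m s))
        = nuQ p (g.coeff (m s)) := by
      rw [hcoeffpow, nuQ_mul (hbm s hst) (pow_ne_zero _ hFlc), nuQ_pow hFlc, hFlcv]
      ring
    have hdom := nuQ_sum_dom (p := p) g.support
      (fun k => g.coeff k * ((polyIter f n) ^ k).coeff (d ^ n * m s)) (m s) hms hmain ?_
    · rw [hmainv] at hdom
      exact hdom
    · intro k hk hkms hterm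
      have hbk : g.coeff k ≠ 0 := mem_support_iff.1 hk
      have hcfk : ((polyIter f n) ^ k).coeff (d ^ n * m s) ≠ 0 :=
        fun h => hterm (by simp [h])
      have hke : k ≤ e := hge ▸ le_natDegree_of_ne_zero hbk
      have hBFk := (hBF.pow k) (d ^ n * m s) hcfk
      have hks : m s < k := by
        have h1 := hBFk.1
        rw [mul_comm (d ^ n) (m s)] at h1
        have := Nat.le_of_mul_le_mul_right h1 hPpos
        omega
      have hksQ : ((m s : ℕ) : ℚ) ≤ (k : ℚ) := by exact_mod_cast le_of_lt hks
      have hbel := hbelow s hst k hke hks hbk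
      have hb2 := hBFk.2
      have hcast : ((k * d ^ n : ℕ) : ℚ) - ((d ^ n * m s : ℕ) : ℚ)
          = (d : ℚ) ^ n * ((k : ℚ) - ((m s : ℕ) : ℚ)) := by push_cast; ring
      rw [hcast] at hb2
      have hb2' : ((u : ℚ) / (β : ℚ) * (d : ℚ)) * ((k : ℚ) - ((m s : ℕ) : ℚ))
          ≤ nuQ p (((polyIter f n) ^ k).coeff (d ^ n * m s)) := by
        rw [← hcnP, mul_assoc]
        exact hb2
      have hb3 : (u : ℚ) * ((k : ℚ) - ((m s : ℕ) : ℚ))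
          ≤ ((u : ℚ) / (β : ℚ) * (d : ℚ)) * ((k : ℚ) - ((m s : ℕ) : ℚ)) :=
        mul_le_mul_of_nonneg_right hgdu (by linarith)
      show nuQ p (g.coeff (m s) * ((polyIter f n) ^ (m s)).coeff (d ^ n * m s))
          < nuQ p (g.coeff k * ((polyIter f n) ^ k).coeff (d ^ n * m s))
      rw [hmainv, nuQ_mul hbk hcfk]
      linarith [hbel, hb2', hb3]
  refine ⟨?_, ?_, ?_, ?_, ?_, ?_, ?_⟩
  · -- constant coefficient nonzero
    have h := (hvertexG t le_rfl).1
    rw [hmt, Nat.mul_zero] at h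
    exact h
  · show d ^ n * (e - m 0) = 0
    rw [hm0, Nat.sub_self, Nat.mul_zero]
  · show d ^ n * (e - m t) = (g.comp (polyIter f n)).natDegree
    rw [hmt, hGdeg, Nat.sub_zero]; ring
  · intro s hst
    show d ^ n * (e - m s) < d ^ n * (e - m (s + 1))
    have h1 := hmdec s hst
    have h2 := hme s (le_of_lt hst)
    have h3 : e - m s < e - m (s + 1) := by omega
    exact Nat.mul_lt_mul_of_le_of_lt (le_refl _) h3 hPpos
  · intro s hs
    have hidxeq : (g.comp (polyIter f n)).natDegree - d ^ n * (e - m s)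
        = d ^ n * m s := by
      rw [hGdeg]
      have h2 := hme s hs
      have h3 : d ^ n * (e - m s) + d ^ n * m s = d ^ n * e := by
        rw [← Nat.mul_add]; congr 1; omega
      have h4 : e * d ^ n = d ^ n * e := Nat.mul_comm _ _
      omega
    show (g.comp (polyIter f n)).coeff
        ((g.comp (polyIter f n)).natDegree - d ^ n * (e - m s)) ≠ 0 ∧
      nuQ p ((g.comp (polyIter f n)).coeff
        ((g.comp (polyIter f n)).natDegree - d ^ n * (e - m s))) = nuQ p (g.coeff (m s))
    rw [hidxeq]
    exact hvertexG s hs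
  · intro s h1 h2
    show (nuQ p (g.coeff (m s)) - nuQ p (g.coeff (m (s - 1)))) /
        (((d ^ n * (e - m s) : ℕ) : ℚ) - ((d ^ n * (e - m (s - 1)) : ℕ) : ℚ)) <
      (nuQ p (g.coeff (m (s + 1))) - nuQ p (g.coeff (m s))) /
        (((d ^ n * (e - m (s + 1)) : ℕ) : ℚ) - ((d ^ n * (e - m s) : ℕ) : ℚ))
    have c1 : ((d ^ n * (e - m s) : ℕ) : ℚ) - ((d ^ n * (e - m (s - 1)) : ℕ) : ℚ)
        = (d : ℚ) ^ n * (((m (s - 1) : ℕ) : ℚ) - ((m s : ℕ) : ℚ)) := by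
      rw [Nat.cast_mul, Nat.cast_mul, hcastX s (by omega), hcastX (s - 1) (by omega)]
      push_cast; ring
    have c2 : ((d ^ n * (e - m (s + 1)) : ℕ) : ℚ) - ((d ^ n * (e - m s) : ℕ) : ℚ)
        = (d : ℚ) ^ n * (((m s : ℕ) : ℚ) - ((m (s + 1) : ℕ) : ℚ)) := by
      rw [Nat.cast_mul, Nat.cast_mul, hcastX s (by omega), hcastX (s + 1) (by omega)]
      push_cast; ring
    rw [c1, c2]
    have r1 : ∀ a L : ℚ, a / ((d : ℚ) ^ n * L) = a / L / (d : ℚ) ^ n := by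
      intro a L; rw [mul_comm, ← div_div]
    rw [r1, r1]
    have H := hlam' s h1 h2
    simp only [Nat.add_sub_cancel] at H
    exact (div_lt_div_iff_of_pos_right hPQ).2 H
  · intro s h1 h2 i hci hbnd1 hbnd2
    show nuQ p (g.coeff (m (s - 1))) +
        (nuQ p (g.coeff (m s)) - nuQ p (g.coeff (m (s - 1)))) /
          (((d ^ n * (e - m s) : ℕ) : ℚ) - ((d ^ n * (e - m (s - 1)) : ℕ) : ℚ)) *
          ((((g.comp (polyIter f n)).natDegree - i : ℕ) : ℚ) -
            ((d ^ n * (e - m (s - 1)) : ℕ) : ℚ))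
        ≤ nuQ p ((g.comp (polyIter f n)).coeff i)
    have hiDg : i ≤ (g.comp (polyIter f n)).natDegree := le_natDegree_of_ne_zero hci
    have c1 : ((d ^ n * (e - m s) : ℕ) : ℚ) - ((d ^ n * (e - m (s - 1)) : ℕ) : ℚ)
        = (d : ℚ) ^ n * (((m (s - 1) : ℕ) : ℚ) - ((m s : ℕ) : ℚ)) := by
      rw [Nat.cast_mul, Nat.cast_mul, hcastX s (by omega), hcastX (s - 1) (by omega)]
      push_cast; ring
    have c3 : (((g.comp (polyIter f n)).natDegree - i : ℕ) : ℚ)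
        = (e : ℚ) * (d : ℚ) ^ n - (i : ℚ) := by
      rw [Nat.cast_sub hiDg, hGdeg]; push_cast; ring
    have c4 : ((d ^ n * (e - m (s - 1)) : ℕ) : ℚ)
        = (d : ℚ) ^ n * ((e : ℚ) - ((m (s - 1) : ℕ) : ℚ)) := by
      rw [Nat.cast_mul, hcastX (s - 1) (by omega)]; push_cast; ring
    rw [c1, c3, c4, coeff_comp_support]
    rw [coeff_comp_support] at hci
    apply nuQ_sum_le _ _ _ _ hci
    intro k hk hterm
    have hbk : g.coeff k ≠ 0 := mem_support_iff.1 hk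
    have hcfk : ((polyIter f n) ^ k).coeff i ≠ 0 := fun h => hterm (by simp [h])
    have hke : k ≤ e := hge ▸ le_natDegree_of_ne_zero hbk
    have hab := habove s h1 h2 k hke hbk
    have hBu := hult s h1 h2
    have hBFk := (hBF.pow k) i hcfk
    have hkPi : (i : ℚ) ≤ (k : ℚ) * (d : ℚ) ^ n := by
      have h := hBFk.1
      exact_mod_cast h
    have hb2 := hBFk.2
    have hc : ((u : ℚ) / (β : ℚ) * (d : ℚ) / (d : ℚ) ^ n) *
          (((k * d ^ n : ℕ) : ℚ) - (i : ℚ))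
        = ((u : ℚ) / (β : ℚ) * (d : ℚ) / (d : ℚ) ^ n) *
          ((k : ℚ) * (d : ℚ) ^ n - (i : ℚ)) := by
      push_cast; ring
    rw [hc] at hb2
    rw [nuQ_mul hbk hcfk]
    set A := (nuQ p (g.coeff (m s)) - nuQ p (g.coeff (m (s - 1)))) /
        ((d : ℚ) ^ n * (((m (s - 1) : ℕ) : ℚ) - ((m s : ℕ) : ℚ))) with hA
    set B := (nuQ p (g.coeff (m s)) - nuQ p (g.coeff (m (s - 1)))) /
        (((m (s - 1) : ℕ) : ℚ) - ((m s : ℕ) : ℚ)) with hB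
    set cn := (u : ℚ) / (β : ℚ) * (d : ℚ) / (d : ℚ) ^ n with hcn
    have hLne : (((m (s - 1) : ℕ) : ℚ) - ((m s : ℕ) : ℚ)) ≠ 0 :=
      sub_ne_zero.2 (ne_of_gt (hgapQ s h1 h2))
    have e0 : A * (d : ℚ) ^ n = B := by
      rw [hA, hB]; field_simp
    have hAcn : A ≤ cn := by
      have h5 : B < cn * (d : ℚ) ^ n := lt_of_lt_of_le hBu (le_of_le_of_eq hgdu hcnP.symm)
      have h6 : A * (d : ℚ) ^ n < cn * (d : ℚ) ^ n := by rw [e0]; exact h5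
      exact le_of_lt (lt_of_mul_lt_mul_right h6 hPQ.le)
    have hprod : 0 ≤ (cn - A) * ((k : ℚ) * (d : ℚ) ^ n - (i : ℚ)) :=
      mul_nonneg (by linarith) (by linarith)
    have identity : nuQ p (g.coeff (m (s - 1))) + B * (((m (s - 1) : ℕ) : ℚ) - (k : ℚ))
          + cn * ((k : ℚ) * (d : ℚ) ^ n - (i : ℚ))
        = nuQ p (g.coeff (m (s - 1)))
          + A * ((e : ℚ) * (d : ℚ) ^ n - (i : ℚ)
              - (d : ℚ) ^ n * ((e : ℚ) - ((m (s - 1) : ℕ) : ℚ)))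
          + (cn - A) * ((k : ℚ) * (d : ℚ) ^ n - (i : ℚ))
          + (B - A * (d : ℚ) ^ n) * (((m (s - 1) : ℕ) : ℚ) - (k : ℚ)) := by ring
    have hz2 : (B - A * (d : ℚ) ^ n) * (((m (s - 1) : ℕ) : ℚ) - (k : ℚ)) = 0 := by
      rw [e0]; ring
    linarith [hab, hb2, identity, hz2, hprod]
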